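/- arXiv:1112.2749 — 2 statements merged into one kernel-verified Lean document; each statement's English description precedes it below -/
import Mathlib

section
/- (Smoothness of implicit free boundary) With f₁ as in the free-boundary equation, at δ = -(ν/2)λ^{1/3}(1 - ξ(t)λ^{1/3}) + o(λ^{2/3}) the partial derivative ∂f₁/∂δ = 3λ^{2/3} - 12δ²/ν² + O(λ^{4/3}) = 6ξ(t)λ + o(λ), which is nonzero for λ small; hence by the implicit function theorem the root δ₁(t) is continuously differentiable in t with dδ₁/dt = O(λ^{2/3}). -/
open Real Set

/-- `h(δ) = (3/2)δ²λ^{2/3} - δ⁴/ν² + (3/2)Bδ²λ^{4/3}`. -/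
noncomputable def hFn (nu B lam δ : ℝ) : ℝ :=
  (3/2) * δ ^ 2 * lam ^ ((2:ℝ)/3) - δ ^ 4 / nu ^ 2 + (3/2) * B * δ ^ 2 * lam ^ ((4:ℝ)/3)

/-- `h'(δ) = 3δλ^{2/3} - 4δ³/ν² + 3Bδλ^{4/3}`. -/
noncomputable def hFn' (nu B lam δ : ℝ) : ℝ :=
  3 * δ * lam ^ ((2:ℝ)/3) - 4 * δ ^ 3 / nu ^ 2 + 3 * B * δ * lam ^ ((4:ℝ)/3)

/-- `f₁(t,δ) = νλ - pνγ₂(t)e^{-pA(T-t)}λ^{5/3} ± pνM e^{-pA(T-t)}λ² - p h(δ)λ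
  + (1+(θ+δ)λ) h'(δ)`, with `γ₂(t) = γ₂ e^{pA(T-t)}(T-t)`. -/
noncomputable def f1FB (p A T gamma2 M e nu B th lam t δ : ℝ) : ℝ :=
  nu * lam
    - p * nu * (gamma2 * exp (p * A * (T - t)) * (T - t)) * exp (-(p * A * (T - t)))
        * lam ^ ((5:ℝ)/3)
    + e * p * nu * M * exp (-(p * A * (T - t))) * lam ^ 2
    - p * hFn nu B lam δ * lam
    + (1 + (th + δ) * lam) * hFn' nu B lam δ

/-- `ξ(t) = √((2/3)p(T-t)γ₂ + B)`. -/
noncomputable def xiFB (p T gamma2 B t : ℝ) : ℝ := Real.sqrt ((2/3) * p * (T - t) * gamma2 + B)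

/-- second derivative of h -/
noncomputable def hFn'' (nu B lam δ : ℝ) : ℝ :=
  3 * lam ^ ((2:ℝ)/3) - 12 * δ ^ 2 / nu ^ 2 + 3 * B * lam ^ ((4:ℝ)/3)

/-- the δ-part of f1 -/
noncomputable def ggFB (p nu B th lam δ : ℝ) : ℝ :=
  - (p * hFn nu B lam δ * lam) + (1 + (th + δ) * lam) * hFn' nu B lam δ

/-- ∂f₁/∂δ -/
noncomputable def DFB (p nu B th lam δ : ℝ) : ℝ :=
  (1 - p) * lam * hFn' nu B lam δ + (1 + (th + δ) * lam) * hFn'' nu B lam δ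

lemma hasStrictDerivAt_hFn (nu B lam d : ℝ) :
    HasStrictDerivAt (fun δ : ℝ => hFn nu B lam δ) (hFn' nu B lam d) d := by
  have hp2 : HasStrictDerivAt (fun δ:ℝ => δ^2) (2*d) d := by
    simpa using hasStrictDerivAt_pow 2 d
  have hp4 : HasStrictDerivAt (fun δ:ℝ => δ^4) (4*d^3) d := by
    simpa using hasStrictDerivAt_pow 4 d
  have h := (((hp2.const_mul ((3:ℝ)/2)).mul_const (lam ^ ((2:ℝ)/3))).sub
      (hp4.div_const (nu^2))).add ((hp2.const_mul ((3:ℝ)/2*B)).mul_const (lam ^ ((4:ℝ)/3)))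
  convert h using 1
  · rfl
  · rfl
  · rfl
  simp only [hFn']; ring

lemma hasStrictDerivAt_hFn' (nu B lam d : ℝ) :
    HasStrictDerivAt (fun δ : ℝ => hFn' nu B lam δ) (hFn'' nu B lam d) d := by
  have hp1 : HasStrictDerivAt (fun δ:ℝ => δ) 1 d := hasStrictDerivAt_id d
  have hp3 : HasStrictDerivAt (fun δ:ℝ => δ^3) (3*d^2) d := by
    simpa using hasStrictDerivAt_pow 3 d
  have h := (((hp1.const_mul (3:ℝ)).mul_const (lam ^ ((2:ℝ)/3))).sub
      ((hp3.const_mul (4:ℝ)).div_const (nu^2))).add ((hp1.const_mul ((3:ℝ)*B)).mul_const (lam ^ ((4:ℝ)/3)))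
  convert h using 1
  · rfl
  · rfl
  · rfl
  simp only [hFn'']; ring

lemma hasStrictDerivAt_gg (p nu B th lam d : ℝ) :
    HasStrictDerivAt (fun δ : ℝ => ggFB p nu B th lam δ) (DFB p nu B th lam d) d := by
  have h1 := hasStrictDerivAt_hFn nu B lam d
  have h2 := hasStrictDerivAt_hFn' nu B lam d
  have hlin : HasStrictDerivAt (fun δ:ℝ => 1 + (th + δ) * lam) lam d := by
    simpa using (((hasStrictDerivAt_id d).const_add th).mul_const lam).const_add 1
  have h := (((h1.const_mul p).mul_const lam).neg).add (hlin.mul h2)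
  convert h using 1
  · rfl
  · rfl
  · rfl
  simp only [DFB, hFn'']; ring

lemma hasStrictDerivAt_f1_delta (p A T gamma2 M e nu B th lam t d : ℝ) :
    HasStrictDerivAt (fun δ => f1FB p A T gamma2 M e nu B th lam t δ)
      (DFB p nu B th lam d) d := by
  have h := (hasStrictDerivAt_gg p nu B th lam d).const_add
    (nu * lam
    - p * nu * (gamma2 * exp (p * A * (T - t)) * (T - t)) * exp (-(p * A * (T - t)))
        * lam ^ ((5:ℝ)/3)
    + e * p * nu * M * exp (-(p * A * (T - t))) * lam ^ 2)
  convert h using 1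
  · rfl
  · rfl
  funext δ; simp [f1FB, ggFB]; ring

/-- the t-part of f1 (exp·exp⁻¹ simplified away) -/
noncomputable def vvFB (p A T gamma2 M e nu lam s : ℝ) : ℝ :=
  nu * lam - p * nu * gamma2 * (T - s) * lam ^ ((5:ℝ)/3)
    + e * p * nu * M * exp (-(p * A * (T - s))) * lam ^ 2

lemma f1_decomp (p A T gamma2 M e nu B th lam t δ : ℝ) :
    f1FB p A T gamma2 M e nu B th lam t δ = vvFB p A T gamma2 M e nu lam t + ggFB p nu B th lam δ := by
  unfold f1FB vvFB ggFB
  have h : exp (p*A*(T-t)) * exp (-(p*A*(T-t))) = 1 := by rw [← Real.exp_add]; simp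
  linear_combination (-(p * nu * gamma2 * (T-t) * lam ^ ((5:ℝ)/3))) * h

lemma hasStrictDerivAt_vv (p A T gamma2 M e nu lam t : ℝ) :
    HasStrictDerivAt (fun s => vvFB p A T gamma2 M e nu lam s)
      (p * nu * gamma2 * lam ^ ((5:ℝ)/3)
        + e * p * nu * M * (exp (-(p * A * (T - t))) * (p * A)) * lam ^ 2) t := by
  have hi : HasStrictDerivAt (fun s : ℝ => -(p * A * (T - s))) (p * A) t := by
    have h := (((hasStrictDerivAt_id t).const_sub T).const_mul (p * A)).neg
    convert h using 1
    · rfl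
    · rfl
    · rfl
    ring
  have hexp := hi.exp
  have h2 : HasStrictDerivAt (fun s : ℝ => p * nu * gamma2 * (T - s) * lam ^ ((5:ℝ)/3))
      (-(p * nu * gamma2 * lam ^ ((5:ℝ)/3))) t := by
    have h := (((hasStrictDerivAt_id t).const_sub T).const_mul (p * nu * gamma2)).mul_const
      (lam ^ ((5:ℝ)/3))
    convert h using 1
    · rfl
    · rfl
    · rfl
    ring
  have h := (h2.const_sub (nu * lam)).add ((hexp.const_mul (e * p * nu * M)).mul_const (lam ^ 2))
  convert h using 1
  · rfl
  · rfl
  · rfl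
  ring


lemma cube_root_props {lam : ℝ} (hl : 0 < lam) :
    ∃ x : ℝ, 0 < x ∧ lam = x^3 ∧ lam ^ ((2:ℝ)/3) = x^2
      ∧ lam ^ ((4:ℝ)/3) = x^4 ∧ lam ^ ((5:ℝ)/3) = x^5 ∧ x = lam ^ ((1:ℝ)/3) := by
  refine ⟨lam ^ ((1:ℝ)/3), Real.rpow_pos_of_pos hl _, ?_, ?_, ?_, ?_, rfl⟩ <;>
  · rw [← Real.rpow_natCast (lam ^ ((1:ℝ)/3)) _, ← Real.rpow_mul hl.le]
    norm_num

set_option maxHeartbeats 1000000 in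
/-- Standalone numeric estimate, minimal context for nlinarith performance. -/
lemma key_num (ε ε' K C2 C3 C4 C1 Ct nu th p B ξ x r d : ℝ)
    (hnu : 0 < nu) (hth : 0 < th) (hε : 0 < ε) (hK1 : 1 ≤ K)
    (hC2def : C2 = nu/2 + nu*K/2 + 1)
    (hC3def : C3 = 3*C2 + 4*C2^3/nu^2 + 3* |B| *C2)
    (hC4def : C4 = 3 + 12*C2^2/nu^2 + 3* |B| )
    (hC1def : C1 = 3* |B| + 3*K^2 + 12*K/nu + 12/nu^2)
    (hCtdef : Ct = C1 + (1+ |p| )*C3 + (th+C2)*C4 + 1)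
    (hX1 : 1 ≤ ξ) (hXK : ξ ≤ K) (hx : 0 < x) (hx1 : x ≤ 1)
    (hε'0 : 0 < ε') (hε'1 : ε' ≤ 1) (hε'ν : ε' ≤ ε*nu/24)
    (hxc : Ct * x ≤ ε/2)
    (hr : |r| ≤ ε' * x^2)
    (hrdef : r = d + (nu/2) * x * (1 - ξ * x)) :
    |(1-p)*x^3*(3*d*x^2 - 4*d^3/nu^2 + 3*B*d*x^4)
      + (3*B*x^4 - 3*ξ^2*x^4 + (12/nu)*x*(1-ξ*x)*r - 12*r^2/nu^2)
      + (th+d)*x^3*(3*x^2 - 12*d^2/nu^2 + 3*B*x^4)| ≤ ε * x^3 := by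
  have hK0 : 0 ≤ K := by linarith
  have hX0 : 0 ≤ ξ := by linarith
  have hax : |x| = x := abs_of_pos hx
  have hC2pos : 0 < C2 := by rw [hC2def]; positivity
  have hpow : ∀ m n : ℕ, m ≤ n → x^n ≤ x^m := fun m n h => pow_le_pow_of_le_one hx.le hx1 h
  have hx2 : x^2 ≤ x := by simpa using hpow 1 2 (by norm_num)
  have hx42 : x^4 ≤ x^2 := hpow 2 4 (by norm_num)
  have hx54 : x^5 ≤ x^4 := hpow 4 5 (by norm_num)
  have hx64 : x^6 ≤ x^4 := hpow 4 6 (by norm_num)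
  have hξx : ξ * x ≤ K * x := mul_le_mul_of_nonneg_right hXK hx.le
  have hξx0 : 0 ≤ ξ * x := mul_nonneg hX0 hx.le
  have h1mx : |1 - ξ*x| ≤ 1 + K*x := by
    rw [abs_le]
    constructor <;> linarith [hξx, hξx0, mul_nonneg hK0 hx.le]
  have hd_abs : |d| ≤ C2 * x := by
    have h1 : |(nu/2)*x*(1-ξ*x)| ≤ (nu/2)*x*(1+K*x) := by
      rw [abs_mul, abs_mul, hax, abs_of_pos (by positivity : (0:ℝ) < nu/2)]
      gcongr
      all_goals first | positivity | exact abs_nonneg _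
    have h2 : |d| ≤ |r| + |(nu/2)*x*(1-ξ*x)| := by
      have : d = r - (nu/2)*x*(1-ξ*x) := by rw [hrdef]; ring
      rw [this]; exact abs_sub _ _
    have h3 : |r| ≤ x^2 :=
      le_trans hr (by linarith [mul_le_mul_of_nonneg_right hε'1 (sq_nonneg x)])
    have h4 : (nu*K/2)*x^2 ≤ (nu*K/2)*x :=
      mul_le_mul_of_nonneg_left hx2 (by positivity)
    have h5 : (nu/2)*x*(1+K*x) = (nu/2)*x + (nu*K/2)*x^2 := by ring
    calc |d| ≤ x^2 + (nu/2)*x*(1+K*x) := by linarith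
    _ ≤ x + ((nu/2)*x + (nu*K/2)*x) := by linarith
    _ = C2 * x := by rw [hC2def]; ring
  have hd2 : |d|^2 ≤ (C2*x)^2 := pow_le_pow_left₀ (abs_nonneg d) hd_abs 2
  have hd3 : |d|^3 ≤ (C2*x)^3 := pow_le_pow_left₀ (abs_nonneg d) hd_abs 3
  have hp_abs : |1 - p| ≤ 1 + |p| := by
    rcases abs_cases p with ⟨h, _⟩ | ⟨h, _⟩ <;> rcases abs_cases (1-p) with ⟨g, _⟩ | ⟨g, _⟩ <;>
      linarith
  have hS1 : |3*d*x^2 - 4*d^3/nu^2 + 3*B*d*x^4| ≤ C3*x^3 := by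
    have h1 : |3*d*x^2| ≤ 3*C2*x^3 := by
      rw [abs_mul, abs_mul, abs_pow, hax, show |(3:ℝ)| = 3 by norm_num]
      calc 3 * |d| * x^2 ≤ 3*(C2*x)*x^2 := by gcongr
      _ = 3*C2*x^3 := by ring
    have h2 : |4*d^3/nu^2| ≤ 4*C2^3/nu^2*x^3 := by
      rw [abs_div, abs_mul, abs_pow, abs_of_nonneg (by positivity : (0:ℝ) ≤ nu^2),
        show |(4:ℝ)| = 4 by norm_num]
      calc 4* |d| ^3/nu^2 ≤ 4*(C2*x)^3/nu^2 := by gcongr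
      _ = 4*C2^3/nu^2*x^3 := by ring
    have h3 : |3*B*d*x^4| ≤ 3* |B| *C2*x^3 := by
      rw [abs_mul, abs_mul, abs_mul, abs_pow, hax, show |(3:ℝ)| = 3 by norm_num]
      have hx53 : x^5 ≤ x^3 := hpow 3 5 (by norm_num)
      calc 3 * |B| * |d| * x^4 ≤ 3 * |B| * (C2*x) * x^4 := by gcongr
      _ = 3* |B| *C2*x^5 := by ring
      _ ≤ 3* |B| *C2*x^3 :=
          mul_le_mul_of_nonneg_left hx53 (by positivity)
    calc |3*d*x^2 - 4*d^3/nu^2 + 3*B*d*x^4|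
        ≤ |3*d*x^2 - 4*d^3/nu^2| + |3*B*d*x^4| := abs_add_le _ _
    _ ≤ |3*d*x^2| + |4*d^3/nu^2| + |3*B*d*x^4| := by
        linarith [abs_sub (3*d*x^2) (4*d^3/nu^2)]
    _ ≤ 3*C2*x^3 + 4*C2^3/nu^2*x^3 + 3* |B| *C2*x^3 := by linarith
    _ = C3*x^3 := by rw [hC3def]; ring
  have hC3pos : 0 ≤ C3*x^3 := le_trans (abs_nonneg _) hS1
  have hT1 : |(1-p)*x^3*(3*d*x^2 - 4*d^3/nu^2 + 3*B*d*x^4)| ≤ (1+ |p| )*C3*x^6 := by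
    rw [abs_mul, abs_mul, abs_pow, hax]
    calc |1-p| * x^3 * |3*d*x^2 - 4*d^3/nu^2 + 3*B*d*x^4|
        ≤ (1+ |p| ) * x^3 * (C3*x^3) := by
          gcongr
          all_goals first | positivity | exact abs_nonneg _ | exact hp_abs | exact hS1
    _ = (1+ |p| )*C3*x^6 := by ring
  have hT2 : |3*B*x^4 - 3*ξ^2*x^4 + (12/nu)*x*(1-ξ*x)*r - 12*r^2/nu^2|
      ≤ (12/nu)*ε'*x^3 + C1*x^4 := by
    have hr2 : r^2 ≤ ε'^2*x^4 := by
      have h := pow_le_pow_left₀ (abs_nonneg r) hr 2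
      rw [sq_abs] at h
      calc r^2 ≤ (ε'*x^2)^2 := h
      _ = ε'^2*x^4 := by ring
    have h1 : |3*B*x^4| ≤ 3* |B| *x^4 := by
      rw [abs_mul, abs_mul, abs_pow, hax, show |(3:ℝ)| = 3 by norm_num]
    have h2 : |3*ξ^2*x^4| ≤ 3*K^2*x^4 := by
      rw [abs_mul, abs_mul, abs_pow, abs_pow, hax, abs_of_nonneg hX0,
        show |(3:ℝ)| = 3 by norm_num]
      gcongr
    have h3 : |(12/nu)*x*(1-ξ*x)*r| ≤ (12/nu)*ε'*x^3 + (12*K/nu)*x^4 := by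
      have e1 : |(12/nu)*x*(1-ξ*x)*r| = (12/nu)*x*(|1-ξ*x| * |r|) := by
        rw [abs_mul, abs_mul, abs_mul, hax, abs_of_pos (by positivity : (0:ℝ) < 12/nu)]
        ring
      have e2 : |1-ξ*x| * |r| ≤ (1+K*x)*(ε'*x^2) :=
        mul_le_mul h1mx hr (abs_nonneg r) (by positivity)
      have e3 : (12/nu)*x*(|1-ξ*x| * |r|) ≤ (12/nu)*x*((1+K*x)*(ε'*x^2)) :=
        mul_le_mul_of_nonneg_left e2 (by positivity)
      have hq : (12*K/nu)*ε'*x^4 ≤ (12*K/nu)*x^4 := by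
        have h := mul_le_mul_of_nonneg_left hε'1 (show (0:ℝ) ≤ (12*K/nu)*x^4 by positivity)
        calc (12*K/nu)*ε'*x^4 = (12*K/nu)*x^4*ε' := by ring
        _ ≤ (12*K/nu)*x^4*1 := h
        _ = (12*K/nu)*x^4 := by ring
      have e4 : (12/nu)*x*((1+K*x)*(ε'*x^2)) = (12/nu)*ε'*x^3 + (12*K/nu)*ε'*x^4 := by
        field_simp
      rw [e1]
      linarith
    have h4 : |12*r^2/nu^2| ≤ 12/nu^2*x^4 := by
      rw [abs_div, abs_mul, abs_of_nonneg (by positivity : (0:ℝ) ≤ nu^2),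
        abs_of_nonneg (sq_nonneg r), show |(12:ℝ)| = 12 by norm_num]
      have hee : ε'^2 ≤ 1 := pow_le_one₀ hε'0.le hε'1
      have hx40 : (0:ℝ) ≤ x^4 := by positivity
      calc 12*r^2/nu^2 ≤ 12*(ε'^2*x^4)/nu^2 := by gcongr
      _ ≤ 12*(1*x^4)/nu^2 := by gcongr
      _ = 12/nu^2*x^4 := by ring
    calc |3*B*x^4 - 3*ξ^2*x^4 + (12/nu)*x*(1-ξ*x)*r - 12*r^2/nu^2|
        ≤ |3*B*x^4 - 3*ξ^2*x^4 + (12/nu)*x*(1-ξ*x)*r| + |12*r^2/nu^2| := abs_sub _ _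
    _ ≤ |3*B*x^4 - 3*ξ^2*x^4| + |(12/nu)*x*(1-ξ*x)*r| + |12*r^2/nu^2| := by
        linarith [abs_add_le (3*B*x^4 - 3*ξ^2*x^4) ((12/nu)*x*(1-ξ*x)*r)]
    _ ≤ |3*B*x^4| + |3*ξ^2*x^4| + |(12/nu)*x*(1-ξ*x)*r| + |12*r^2/nu^2| := by
        linarith [abs_sub (3*B*x^4) (3*ξ^2*x^4)]
    _ ≤ 3* |B| *x^4 + 3*K^2*x^4 + ((12/nu)*ε'*x^3 + (12*K/nu)*x^4) + 12/nu^2*x^4 := by linarith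
    _ = (12/nu)*ε'*x^3 + C1*x^4 := by rw [hC1def]; ring
  have hS2 : |3*x^2 - 12*d^2/nu^2 + 3*B*x^4| ≤ C4*x^2 := by
    have h1 : |3*x^2| ≤ 3*x^2 := le_of_eq (abs_of_nonneg (by positivity))
    have h2 : |12*d^2/nu^2| ≤ 12*C2^2/nu^2*x^2 := by
      rw [abs_div, abs_mul, abs_of_nonneg (by positivity : (0:ℝ) ≤ nu^2),
        abs_of_nonneg (sq_nonneg d), show |(12:ℝ)| = 12 by norm_num]
      have hdd : d^2 ≤ (C2*x)^2 := by rw [← sq_abs d]; exact hd2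
      calc 12*d^2/nu^2 ≤ 12*(C2*x)^2/nu^2 := by gcongr
      _ = 12*C2^2/nu^2*x^2 := by ring
    have h3 : |3*B*x^4| ≤ 3* |B| *x^2 := by
      rw [abs_mul, abs_mul, abs_pow, hax, show |(3:ℝ)| = 3 by norm_num]
      exact mul_le_mul_of_nonneg_left hx42 (by positivity)
    calc |3*x^2 - 12*d^2/nu^2 + 3*B*x^4|
        ≤ |3*x^2 - 12*d^2/nu^2| + |3*B*x^4| := abs_add_le _ _
    _ ≤ |3*x^2| + |12*d^2/nu^2| + |3*B*x^4| := by linarith [abs_sub (3*x^2) (12*d^2/nu^2)]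
    _ ≤ 3*x^2 + 12*C2^2/nu^2*x^2 + 3* |B| *x^2 := by linarith
    _ = C4*x^2 := by rw [hC4def]; ring
  have hT3 : |(th+d)*x^3*(3*x^2 - 12*d^2/nu^2 + 3*B*x^4)| ≤ (th+C2)*C4*x^5 := by
    rw [abs_mul, abs_mul, abs_pow, hax]
    have hthd : |th + d| ≤ th + C2 := by
      have h := abs_add_le th d
      have h' : |th| = th := abs_of_pos hth
      have hC2x : C2*x ≤ C2 := by
        calc C2*x ≤ C2*1 := mul_le_mul_of_nonneg_left hx1 hC2pos.le
        _ = C2 := mul_one C2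
      linarith
    calc |th+d| * x^3 * |3*x^2 - 12*d^2/nu^2 + 3*B*x^4|
        ≤ (th+C2) * x^3 * (C4*x^2) := by
          gcongr
          all_goals first | positivity | exact abs_nonneg _ | exact hthd | exact hS2
    _ = (th+C2)*C4*x^5 := by ring
  have htri : |(1-p)*x^3*(3*d*x^2 - 4*d^3/nu^2 + 3*B*d*x^4)
      + (3*B*x^4 - 3*ξ^2*x^4 + (12/nu)*x*(1-ξ*x)*r - 12*r^2/nu^2)
      + (th+d)*x^3*(3*x^2 - 12*d^2/nu^2 + 3*B*x^4)|
      ≤ (1+ |p| )*C3*x^6 + ((12/nu)*ε'*x^3 + C1*x^4) + (th+C2)*C4*x^5 := by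
    calc |(1-p)*x^3*(3*d*x^2 - 4*d^3/nu^2 + 3*B*d*x^4)
        + (3*B*x^4 - 3*ξ^2*x^4 + (12/nu)*x*(1-ξ*x)*r - 12*r^2/nu^2)
        + (th+d)*x^3*(3*x^2 - 12*d^2/nu^2 + 3*B*x^4)|
        ≤ |(1-p)*x^3*(3*d*x^2 - 4*d^3/nu^2 + 3*B*d*x^4)
            + (3*B*x^4 - 3*ξ^2*x^4 + (12/nu)*x*(1-ξ*x)*r - 12*r^2/nu^2)|
          + |(th+d)*x^3*(3*x^2 - 12*d^2/nu^2 + 3*B*x^4)| := abs_add_le _ _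
    _ ≤ |(1-p)*x^3*(3*d*x^2 - 4*d^3/nu^2 + 3*B*d*x^4)|
          + |3*B*x^4 - 3*ξ^2*x^4 + (12/nu)*x*(1-ξ*x)*r - 12*r^2/nu^2|
          + |(th+d)*x^3*(3*x^2 - 12*d^2/nu^2 + 3*B*x^4)| := by
        linarith [abs_add_le ((1-p)*x^3*(3*d*x^2 - 4*d^3/nu^2 + 3*B*d*x^4))
          (3*B*x^4 - 3*ξ^2*x^4 + (12/nu)*x*(1-ξ*x)*r - 12*r^2/nu^2)]
    _ ≤ (1+ |p| )*C3*x^6 + ((12/nu)*ε'*x^3 + C1*x^4) + (th+C2)*C4*x^5 := by linarith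
  have hC3pos' : 0 < C3 := by rw [hC3def]; positivity
  have hC4pos' : 0 < C4 := by rw [hC4def]; positivity
  have e1 : (1+ |p| )*C3*x^6 ≤ (1+ |p| )*C3*x^4 := by
    apply mul_le_mul_of_nonneg_left hx64
    positivity
  have e2 : (th+C2)*C4*x^5 ≤ (th+C2)*C4*x^4 := by
    apply mul_le_mul_of_nonneg_left hx54
    have h1 : 0 < th + C2 := by linarith
    positivity
  have e3 : (12/nu)*ε'*x^3 ≤ (ε/2)*x^3 := by
    have h : (12/nu)*ε' ≤ (12/nu)*(ε*nu/24) :=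
      mul_le_mul_of_nonneg_left hε'ν (by positivity)
    have heq : (12/nu)*(ε*nu/24) = ε/2 := by field_simp; ring
    have := mul_le_mul_of_nonneg_right (heq ▸ h) (show (0:ℝ) ≤ x^3 by positivity)
    linarith
  have e4 : C1*x^4 + (1+ |p| )*C3*x^4 + (th+C2)*C4*x^4 ≤ Ct*x^4 := by
    have h : C1 + (1+ |p| )*C3 + (th+C2)*C4 ≤ Ct := by rw [hCtdef]; linarith
    calc C1*x^4 + (1+ |p| )*C3*x^4 + (th+C2)*C4*x^4
        = (C1 + (1+ |p| )*C3 + (th+C2)*C4)*x^4 := by ring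
    _ ≤ Ct*x^4 := mul_le_mul_of_nonneg_right h (by positivity)
  have e5 : Ct*x^4 ≤ (ε/2)*x^3 := by
    calc Ct*x^4 = (Ct*x)*x^3 := by ring
    _ ≤ (ε/2)*x^3 := mul_le_mul_of_nonneg_right hxc (by positivity)
  linarith

lemma key (p T gamma2 nu B th : ℝ) (hT : 0 < T) (hnu : 0 < nu) (hth : 0 < th)
    (hxi : ∀ t ∈ Icc (0:ℝ) T, 1 ≤ (2/3) * p * (T - t) * gamma2 + B) :
    ∀ ε > 0, ∃ ε' > 0, ∃ lam0 > 0, ∀ lam ∈ Ioo (0:ℝ) lam0, ∀ t ∈ Icc (0:ℝ) T, ∀ d : ℝ,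
      |d + (nu/2) * lam ^ ((1:ℝ)/3) * (1 - xiFB p T gamma2 B t * lam ^ ((1:ℝ)/3))|
          ≤ ε' * lam ^ ((2:ℝ)/3) →
      |DFB p nu B th lam d - 6 * xiFB p T gamma2 B t * lam| ≤ ε * lam := by
  intro ε hε
  obtain ⟨K, hKdef⟩ : ∃ K : ℝ, K = (2/3) * |p| * T * |gamma2| + |B| := ⟨_, rfl⟩
  have hargK : ∀ t ∈ Icc (0:ℝ) T, (2/3) * p * (T - t) * gamma2 + B ≤ K := by
    intro t ht
    rw [hKdef]
    have h1 : (2/3)*p*(T-t)*gamma2 ≤ (2/3) * |p| * T * |gamma2| := by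
      calc (2/3)*p*(T-t)*gamma2 ≤ |(2/3)*p*(T-t)*gamma2| := le_abs_self _
      _ = (2/3)* |p| * |T-t| * |gamma2| := by
          rw [abs_mul, abs_mul, abs_mul]; norm_num
      _ ≤ (2/3)* |p| *T* |gamma2| := by
          have h0 : |T - t| = T - t := abs_of_nonneg (by linarith [ht.2])
          rw [h0]
          have h2 : T - t ≤ T := by linarith [ht.1]
          gcongr
    linarith [le_abs_self B]
  have hK1 : 1 ≤ K := le_trans (hxi 0 ⟨le_refl 0, hT.le⟩) (hargK 0 ⟨le_refl 0, hT.le⟩)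
  have hK0 : 0 ≤ K := by linarith
  have hxiLB : ∀ t ∈ Icc (0:ℝ) T, 1 ≤ xiFB p T gamma2 B t := by
    intro t ht
    rw [xiFB, show (1:ℝ) = Real.sqrt 1 by simp]
    exact Real.sqrt_le_sqrt (hxi t ht)
  have hxiUB : ∀ t ∈ Icc (0:ℝ) T, xiFB p T gamma2 B t ≤ K := by
    intro t ht
    have harg : (2/3) * p * (T - t) * gamma2 + B ≤ K^2 := by
      have h : K ≤ K^2 := by
        calc K = K*1 := (mul_one K).symm
        _ ≤ K*K := mul_le_mul_of_nonneg_left hK1 hK0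
        _ = K^2 := (pow_two K).symm
      exact le_trans (hargK t ht) h
    calc xiFB p T gamma2 B t ≤ Real.sqrt (K^2) := Real.sqrt_le_sqrt harg
    _ = K := Real.sqrt_sq hK0
  obtain ⟨C2, hC2def⟩ : ∃ c : ℝ, c = nu/2 + nu*K/2 + 1 := ⟨_, rfl⟩
  obtain ⟨C3, hC3def⟩ : ∃ c : ℝ, c = 3*C2 + 4*C2^3/nu^2 + 3* |B| *C2 := ⟨_, rfl⟩
  obtain ⟨C4, hC4def⟩ : ∃ c : ℝ, c = 3 + 12*C2^2/nu^2 + 3* |B| := ⟨_, rfl⟩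
  obtain ⟨C1, hC1def⟩ : ∃ c : ℝ, c = 3* |B| + 3*K^2 + 12*K/nu + 12/nu^2 := ⟨_, rfl⟩
  obtain ⟨Ct, hCtdef⟩ : ∃ c : ℝ, c = C1 + (1+ |p| )*C3 + (th+C2)*C4 + 1 := ⟨_, rfl⟩
  have hK1' : 0 < K := by linarith
  have hC2pos : 0 < C2 := by rw [hC2def]; positivity
  have hC3pos : 0 < C3 := by rw [hC3def]; positivity
  have hC4pos : 0 < C4 := by rw [hC4def]; positivity
  have hC1pos : 0 < C1 := by rw [hC1def]; positivity
  have hCt : 0 < Ct := by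
    rw [hCtdef]
    have h1 : 0 ≤ (1+ |p| )*C3 := by positivity
    have h2 : 0 ≤ (th+C2)*C4 := by positivity
    linarith
  refine ⟨min (ε*nu/24) 1, lt_min (by positivity) one_pos,
    min 1 ((ε/(2*Ct))^3), lt_min one_pos (by positivity), ?_⟩
  intro lam hlam t ht d hd
  obtain ⟨hl0, hl1⟩ := hlam
  obtain ⟨ξ, hXdef⟩ : ∃ c : ℝ, c = xiFB p T gamma2 B t := ⟨_, rfl⟩
  rw [← hXdef] at hd ⊢
  have hX1 : 1 ≤ ξ := hXdef ▸ hxiLB t ht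
  have hXK : ξ ≤ K := hXdef ▸ hxiUB t ht
  obtain ⟨x, hx, hlx3, h23, h43, h53, hxeq⟩ := cube_root_props hl0
  have hx1 : x ≤ 1 := by
    rw [hxeq]
    exact Real.rpow_le_one hl0.le (le_trans hl1.le (min_le_left _ _)) (by norm_num)
  have hxc : Ct * x ≤ ε/2 := by
    have hc : 0 < ε/(2*Ct) := by positivity
    have hle : lam ≤ (ε/(2*Ct))^3 := le_trans hl1.le (min_le_right _ _)
    have hxle : x ≤ ε/(2*Ct) := by
      have h := Real.rpow_le_rpow hl0.le hle (show (0:ℝ) ≤ 1/3 by norm_num)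
      rw [hxeq]
      rwa [show ((ε/(2*Ct))^3) ^ ((1:ℝ)/3) = ε/(2*Ct) by
        rw [← Real.rpow_natCast (ε/(2*Ct)) 3, ← Real.rpow_mul hc.le]; norm_num] at h
    calc Ct * x ≤ Ct * (ε/(2*Ct)) := mul_le_mul_of_nonneg_left hxle hCt.le
    _ = ε/2 := by field_simp
  obtain ⟨ε', hε'def⟩ : ∃ c : ℝ, c = min (ε*nu/24) 1 := ⟨_, rfl⟩
  rw [← hε'def] at hd
  have hε'1 : ε' ≤ 1 := hε'def ▸ min_le_right _ _
  have hε'ν : ε' ≤ ε*nu/24 := hε'def ▸ min_le_left _ _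
  have hε'0 : 0 < ε' := by rw [hε'def]; exact lt_min (by positivity) one_pos
  rw [h23, ← hxeq] at hd
  obtain ⟨r, hrdef⟩ : ∃ c : ℝ, c = d + (nu/2) * x * (1 - ξ * x) := ⟨_, rfl⟩
  rw [← hrdef] at hd
  have hE : DFB p nu B th lam d - 6 * ξ * lam =
      (1-p)*x^3*(3*d*x^2 - 4*d^3/nu^2 + 3*B*d*x^4)
      + (3*B*x^4 - 3*ξ^2*x^4 + (12/nu)*x*(1-ξ*x)*r - 12*r^2/nu^2)
      + (th+d)*x^3*(3*x^2 - 12*d^2/nu^2 + 3*B*x^4) := by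
    simp only [DFB, hFn', hFn'', h23, h43, hrdef]
    rw [hlx3]
    field_simp
    ring
  rw [hE, show ε * lam = ε * x^3 from by rw [hlx3]]
  exact key_num ε ε' K C2 C3 C4 C1 Ct nu th p B ξ x r d hnu hth hε hK1
    hC2def hC3def hC4def hC1def hCtdef hX1 hXK hx hx1 hε'0 hε'1 hε'ν hxc hd hrdef

lemma xiFB_ge_one {p T gamma2 B t : ℝ} (h : 1 ≤ (2/3) * p * (T - t) * gamma2 + B) :
    1 ≤ xiFB p T gamma2 B t := by
  rw [xiFB, show (1:ℝ) = Real.sqrt 1 by simp]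
  exact Real.sqrt_le_sqrt h


/-- Smoothness of the implicit free boundary: near
`δ = -(ν/2)λ^{1/3}(1-ξ(t)λ^{1/3}) + o(λ^{2/3})` the partial `∂f₁/∂δ = 6ξ(t)λ + o(λ)`
(hence nonzero for small `λ`), and any continuous root branch `δ₁(t)` of that form is
continuously differentiable with `dδ₁/dt = O(λ^{2/3})`. -/
theorem stmt8 (p A T gamma2 M e nu B th : ℝ)
    (hp1 : p < 1) (hp0 : p ≠ 0) (hT : 0 < T) (hnu : 0 < nu) (hM : 0 < M)
    (hth : 0 < th) (he : e = 1 ∨ e = -1)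
    (hxi : ∀ t ∈ Icc (0:ℝ) T, 1 ≤ (2/3) * p * (T - t) * gamma2 + B) :
    (∀ ε > 0, ∃ ε' > 0, ∃ lam0 > 0, ∀ lam ∈ Ioo (0:ℝ) lam0, ∀ t ∈ Icc (0:ℝ) T,
      ∀ d : ℝ,
        |d + (nu/2) * lam ^ ((1:ℝ)/3) * (1 - xiFB p T gamma2 B t * lam ^ ((1:ℝ)/3))|
            ≤ ε' * lam ^ ((2:ℝ)/3) →
        |deriv (fun δ => f1FB p A T gamma2 M e nu B th lam t δ) d
            - 6 * xiFB p T gamma2 B t * lam| ≤ ε * lam ∧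
        deriv (fun δ => f1FB p A T gamma2 M e nu B th lam t δ) d ≠ 0) ∧
    ∃ C > 0, ∃ ε' > 0, ∃ lam0 > 0, ∀ lam ∈ Ioo (0:ℝ) lam0, ∀ δ₁ : ℝ → ℝ,
      ContinuousOn δ₁ (Icc 0 T) →
      (∀ t ∈ Icc (0:ℝ) T,
        f1FB p A T gamma2 M e nu B th lam t (δ₁ t) = 0 ∧
        |δ₁ t + (nu/2) * lam ^ ((1:ℝ)/3) * (1 - xiFB p T gamma2 B t * lam ^ ((1:ℝ)/3))|
          ≤ ε' * lam ^ ((2:ℝ)/3)) →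
      ∀ t ∈ Icc (0:ℝ) T, ∃ d : ℝ,
        HasDerivWithinAt δ₁ d (Icc 0 T) t ∧ |d| ≤ C * lam ^ ((2:ℝ)/3) := by

  have hderiv : ∀ lam t d : ℝ, deriv (fun δ => f1FB p A T gamma2 M e nu B th lam t δ) d
      = DFB p nu B th lam d :=
    fun lam t d => (hasStrictDerivAt_f1_delta p A T gamma2 M e nu B th lam t d).hasDerivAt.deriv
  constructor
  · -- Part 1
    intro ε hε
    obtain ⟨ε', hε'0, lam0, hlam0, hkey⟩ :=
      key p T gamma2 nu B th hT hnu hth hxi (min ε 5) (lt_min hε (by norm_num))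
    refine ⟨ε', hε'0, lam0, hlam0, ?_⟩
    intro lam hlam t ht d hd
    have hb := hkey lam hlam t ht d hd
    rw [hderiv]
    have hX1 : 1 ≤ xiFB p T gamma2 B t := xiFB_ge_one (hxi t ht)
    have hl0 : 0 < lam := hlam.1
    have hXlam : lam ≤ xiFB p T gamma2 B t * lam := by
      have := mul_le_mul_of_nonneg_right hX1 hl0.le
      linarith
    obtain ⟨hb1, hb2⟩ := abs_le.mp hb
    constructor
    · have hmin : min ε 5 ≤ ε := min_le_left _ _
      rw [abs_le]
      constructor
      · have : -(ε * lam) ≤ -(min ε 5 * lam) := by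
          have := mul_le_mul_of_nonneg_right hmin hl0.le
          linarith
        linarith
      · have : min ε 5 * lam ≤ ε * lam := mul_le_mul_of_nonneg_right hmin hl0.le
        linarith
    · have h5 : min ε 5 * lam ≤ 5 * lam :=
        mul_le_mul_of_nonneg_right (min_le_right _ _) hl0.le
      have : 0 < DFB p nu B th lam d := by linarith
      exact ne_of_gt this
  · -- Part 2
    obtain ⟨EE, hEEdef⟩ : ∃ c : ℝ, c = Real.exp (|p| * |A| * T) := ⟨_, rfl⟩
    obtain ⟨C5, hC5def⟩ : ∃ c : ℝ, c = |p| * nu * |gamma2|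
      + nu * M * |p| * |p| * |A| * EE + 1 := ⟨_, rfl⟩
    have hEE : 0 < EE := by rw [hEEdef]; positivity
    have hC5 : 0 < C5 := by
      rw [hC5def]
      have h1 : 0 ≤ |p| * nu * |gamma2| := by positivity
      have h2 : 0 ≤ nu * M * |p| * |p| * |A| * EE := by positivity
      linarith
    obtain ⟨ε', hε'0, lam1, hlam1, hkey⟩ :=
      key p T gamma2 nu B th hT hnu hth hxi 1 one_pos
    refine ⟨C5, hC5, ε', hε'0, min lam1 1, lt_min hlam1 one_pos, ?_⟩
    intro lam hlam δ₁ hcont hroot t ht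
    have hl0 : 0 < lam := hlam.1
    have hlam' : lam ∈ Ioo (0:ℝ) lam1 := ⟨hl0, lt_of_lt_of_le hlam.2 (min_le_left _ _)⟩
    obtain ⟨x, hx, hlx3, h23, h43, h53, hxeq⟩ := cube_root_props hl0
    have hx1 : x ≤ 1 := by
      rw [hxeq]
      exact Real.rpow_le_one hl0.le (le_of_lt (lt_of_lt_of_le hlam.2 (min_le_right _ _)))
        (by norm_num)
    set x₀ := δ₁ t with hx₀def
    have hroott := hroot t ht
    have hDb := hkey lam hlam' t ht x₀ hroott.2
    have hX1 : 1 ≤ xiFB p T gamma2 B t := xiFB_ge_one (hxi t ht)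
    have hXlam : lam ≤ xiFB p T gamma2 B t * lam := by
      have := mul_le_mul_of_nonneg_right hX1 hl0.le
      linarith
    obtain ⟨hb1, hb2⟩ := abs_le.mp hDb
    have hD5 : 5 * lam ≤ DFB p nu B th lam x₀ := by linarith
    have hDpos : 0 < DFB p nu B th lam x₀ := by linarith
    have hDne : DFB p nu B th lam x₀ ≠ 0 := ne_of_gt hDpos
    -- local inverse of the δ-part
    have hgg := hasStrictDerivAt_gg p nu B th lam x₀
    set φ := hgg.localInverse _ _ _ hDne with hφdef
    have hφ : HasStrictDerivAt φ (DFB p nu B th lam x₀)⁻¹ (ggFB p nu B th lam x₀) :=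
      hgg.to_localInverse hDne
    have hev : ∀ᶠ y in nhds x₀, φ (ggFB p nu B th lam y) = y :=
      (hgg.hasStrictFDerivAt_equiv hDne).eventually_left_inverse
    -- root equation : gg (δ₁ s) = - vv s on Icc
    have hggroot : ∀ s ∈ Icc (0:ℝ) T, ggFB p nu B th lam (δ₁ s)
        = -(vvFB p A T gamma2 M e nu lam s) := by
      intro s hs
      have h0 := (hroot s hs).1
      rw [f1_decomp] at h0
      linarith
    have hggx0 : ggFB p nu B th lam x₀ = -(vvFB p A T gamma2 M e nu lam t) := hggroot t ht
    -- δ₁ agrees with φ ∘ (- vv) near t within Icc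
    have hcw : ContinuousWithinAt δ₁ (Icc 0 T) t := hcont t ht
    have h1 : ∀ᶠ s in nhdsWithin t (Icc (0:ℝ) T), φ (ggFB p nu B th lam (δ₁ s)) = δ₁ s :=
      hcw.eventually hev
    have h2 : ∀ᶠ s in nhdsWithin t (Icc (0:ℝ) T), s ∈ Icc (0:ℝ) T :=
      eventually_mem_nhdsWithin
    have heq : δ₁ =ᶠ[nhdsWithin t (Icc (0:ℝ) T)]
        (φ ∘ fun s => -(vvFB p A T gamma2 M e nu lam s)) := by
      filter_upwards [h1, h2] with s hs1 hs2
      have : ggFB p nu B th lam (δ₁ s) = -(vvFB p A T gamma2 M e nu lam s) := hggroot s hs2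
      simp only [Function.comp]
      rw [← this, hs1]
    -- derivative of the composition
    obtain ⟨w', hw'def⟩ : ∃ c : ℝ, c = p * nu * gamma2 * lam ^ ((5:ℝ)/3)
        + e * p * nu * M * (Real.exp (-(p * A * (T - t))) * (p * A)) * lam ^ 2 := ⟨_, rfl⟩
    have hvv : HasStrictDerivAt (fun s => -(vvFB p A T gamma2 M e nu lam s)) (-w') t := by
      rw [hw'def]
      exact (hasStrictDerivAt_vv p A T gamma2 M e nu lam t).neg
    have hφ' : HasStrictDerivAt φ (DFB p nu B th lam x₀)⁻¹
        (-(vvFB p A T gamma2 M e nu lam t)) := hggx0 ▸ hφ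
    have hcomp : HasStrictDerivAt (φ ∘ fun s => -(vvFB p A T gamma2 M e nu lam s))
        ((DFB p nu B th lam x₀)⁻¹ * (-w')) t := hφ'.comp t hvv
    have hδd : HasDerivWithinAt δ₁ ((DFB p nu B th lam x₀)⁻¹ * (-w')) (Icc 0 T) t := by
      refine (hcomp.hasDerivAt.hasDerivWithinAt).congr_of_eventuallyEq heq ?_
      have h3 : φ (ggFB p nu B th lam x₀) = x₀ := hev.self_of_nhds
      simp only [Function.comp]
      rw [← hggx0, h3]
    refine ⟨_, hδd, ?_⟩
    -- the derivative bound
    have hw'b : |w'| ≤ C5 * x^5 := by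
      rw [hw'def]
      have he1 : |e| = 1 := by rcases he with h | h <;> rw [h] <;> norm_num
      have hexp : Real.exp (-(p * A * (T - t))) ≤ EE := by
        rw [hEEdef]
        apply Real.exp_le_exp.mpr
        calc -(p * A * (T - t)) ≤ |p * A * (T - t)| := by
              rw [← abs_neg]; exact le_abs_self _
        _ = |p| * |A| * |T - t| := by rw [abs_mul, abs_mul]
        _ ≤ |p| * |A| * T := by
            rw [abs_of_nonneg (by linarith [ht.2] : (0:ℝ) ≤ T - t)]
            have h0 := ht.1
            gcongr
            linarith
      have ha : |p * nu * gamma2 * lam ^ ((5:ℝ)/3)| ≤ |p| * nu * |gamma2| * x^5 := by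
        rw [h53, abs_mul, abs_mul, abs_mul, abs_of_pos hnu,
          abs_of_nonneg (by positivity : (0:ℝ) ≤ x^5)]
      have hb : |e * p * nu * M * (Real.exp (-(p * A * (T - t))) * (p * A)) * lam ^ 2|
          ≤ nu * M * |p| * |p| * |A| * EE * x^5 := by
        have hlam2 : lam^2 = x^6 := by rw [hlx3]; ring
        rw [hlam2]
        simp only [abs_mul, he1, abs_of_pos hnu, abs_of_pos hM,
          abs_of_pos (Real.exp_pos (-(p * A * (T - t)))),
          abs_of_nonneg (by positivity : (0:ℝ) ≤ x^6)]
        have hx65 : x^6 ≤ x^5 := pow_le_pow_of_le_one hx.le hx1 (by norm_num)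
        calc 1 * |p| * nu * M * (Real.exp (-(p * A * (T - t))) * (|p| * |A|)) * x^6
            ≤ 1 * |p| * nu * M * (EE * (|p| * |A|)) * x^6 := by gcongr
        _ ≤ 1 * |p| * nu * M * (EE * (|p| * |A|)) * x^5 := by
            apply mul_le_mul_of_nonneg_left hx65
            positivity
        _ = nu * M * |p| * |p| * |A| * EE * x^5 := by ring
      calc |p * nu * gamma2 * lam ^ ((5:ℝ)/3)
            + e * p * nu * M * (Real.exp (-(p * A * (T - t))) * (p * A)) * lam ^ 2|
          ≤ |p * nu * gamma2 * lam ^ ((5:ℝ)/3)|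
            + |e * p * nu * M * (Real.exp (-(p * A * (T - t))) * (p * A)) * lam ^ 2| :=
            abs_add_le _ _
      _ ≤ |p| * nu * |gamma2| * x^5 + nu * M * |p| * |p| * |A| * EE * x^5 := by linarith
      _ = (|p| * nu * |gamma2| + nu * M * |p| * |p| * |A| * EE) * x^5 := by ring
      _ ≤ C5 * x^5 := by
          apply mul_le_mul_of_nonneg_right _ (by positivity : (0:ℝ) ≤ x^5)
          rw [hC5def]
          linarith
    have habs : |(DFB p nu B th lam x₀)⁻¹ * (-w')| = (DFB p nu B th lam x₀)⁻¹ * |w'| := by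
      rw [abs_mul, abs_neg, abs_inv, abs_of_pos hDpos]
    have hinv : (DFB p nu B th lam x₀)⁻¹ ≤ (5 * lam)⁻¹ := by
      apply inv_anti₀ (by positivity) hD5
    have hfin : (DFB p nu B th lam x₀)⁻¹ * |w'| ≤ (5 * lam)⁻¹ * (C5 * x^5) := by
      apply mul_le_mul hinv hw'b (abs_nonneg _) (by positivity)
    have heval : (5 * lam)⁻¹ * (C5 * x^5) = (C5/5) * x^2 := by
      rw [hlx3]
      field_simp
    rw [h23, habs]
    calc (DFB p nu B th lam x₀)⁻¹ * |w'| ≤ (C5/5) * x^2 := by rw [← heval]; exact hfin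
    _ ≤ C5 * x^2 := mul_le_mul_of_nonneg_right (by linarith) (sq_nonneg x)
end

section
/- (Drift inequality in the no-trade region) Let w(t,z) = (1/p)e^{pA(T-t)} - γ₂(t)λ^{2/3} ± Mλ - (e^{pA(T-t)}/ν) h(z-θ) where γ₂(t) = γ₂ e^{pA(T-t)}(T-t), γ₂ = ((9/32)(1-p)θ⁴(1-θ)⁴)^{1/3}σ², ν = (12θ²(1-θ)²/(1-p))^{1/3}, h(δ) = (3/2)δ²λ^{2/3} - δ⁴/ν² + (3/2)Bδ²λ^{4/3}. Then for |z-θ| ≤ νλ^{1/3}: -w_t + D w = ∓ pAMλ(1 - σ²(1-p)(z-θ)²/(2A)) + R(t,z,λ), where the leading λ^{2/3} and (z-θ)² terms cancel exactly by the definitions of γ₂ and ν, and |R| ≤ Cλ uniformly in (t,z) for a constant C = 6(σ²/ν)(2νθ|(1-θ)(1-2θ)|+1)+1. -/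
open Real Set

/-- `w^±(t,z) = (1/p)e^{pA(T-t)} - γ₂(t)λ^{2/3} ± Mλ - (e^{pA(T-t)}/ν) h(z-θ)`,
with `γ₂(t) = γ₂ e^{pA(T-t)}(T-t)` and sign `e = ±1`. -/
noncomputable def wNT (p A T gamma2 M e nu B lam t z th : ℝ) : ℝ :=
  (1/p) * exp (p * A * (T - t)) - gamma2 * exp (p * A * (T - t)) * (T - t) * lam ^ ((2:ℝ)/3)
    + e * M * lam - (exp (p * A * (T - t)) / nu) * hFn nu B lam (z - th)

section aux

lemma hFn_hasDerivAt (nu B lam δ : ℝ) :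
    HasDerivAt (hFn nu B lam)
      (3 * δ * lam ^ ((2:ℝ)/3) - 4 * δ ^ 3 / nu ^ 2 + 3 * B * δ * lam ^ ((4:ℝ)/3)) δ := by
  have h : HasDerivAt (fun d : ℝ => (3/2) * d ^ 2 * lam ^ ((2:ℝ)/3) - d ^ 4 / nu ^ 2
      + (3/2) * B * d ^ 2 * lam ^ ((4:ℝ)/3))
      ((3/2) * (2 * δ) * lam ^ ((2:ℝ)/3) - (4 * δ ^ 3) / nu ^ 2
        + (3/2) * B * (2 * δ) * lam ^ ((4:ℝ)/3)) δ := by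
    have h2 : HasDerivAt (fun d : ℝ => d ^ 2) (2 * δ) δ := by
      simpa using hasDerivAt_pow 2 δ
    have h4 : HasDerivAt (fun d : ℝ => d ^ 4) (4 * δ ^ 3) δ := by
      simpa using hasDerivAt_pow 4 δ
    exact (((h2.const_mul (3/2)).mul_const _).sub (h4.div_const _)).add
      (((h2.const_mul ((3/2)*B)).mul_const _))
  refine h.congr_deriv ?_; ring

lemma deriv_wNT_z (p A T gamma2 M e nu B lam t z th : ℝ) :
    deriv (fun z' => wNT p A T gamma2 M e nu B lam t z' th) z
      = -(exp (p * A * (T - t)) / nu) *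
          (3 * (z - th) * lam ^ ((2:ℝ)/3) - 4 * (z - th) ^ 3 / nu ^ 2
            + 3 * B * (z - th) * lam ^ ((4:ℝ)/3)) := by
  have hδ : HasDerivAt (fun z' : ℝ => z' - th) 1 z := by
    simpa using (hasDerivAt_id z).sub_const th
  have h := ((hFn_hasDerivAt nu B lam (z - th)).comp z hδ).const_mul
      (exp (p * A * (T - t)) / nu)
  have h2 : HasDerivAt (fun z' => wNT p A T gamma2 M e nu B lam t z' th)
      (-(exp (p * A * (T - t)) / nu) *
        (3 * (z - th) * lam ^ ((2:ℝ)/3) - 4 * (z - th) ^ 3 / nu ^ 2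
          + 3 * B * (z - th) * lam ^ ((4:ℝ)/3))) z := by
    have h3 := (hasDerivAt_const z ((1/p) * exp (p * A * (T - t))
      - gamma2 * exp (p * A * (T - t)) * (T - t) * lam ^ ((2:ℝ)/3) + e * M * lam)).sub h
    refine h3.congr_deriv ?_; ring
  exact h2.deriv

lemma deriv2_wNT_z (p A T gamma2 M e nu B lam t z th : ℝ) :
    deriv (fun z' => deriv (fun z'' => wNT p A T gamma2 M e nu B lam t z'' th) z') z
      = -(exp (p * A * (T - t)) / nu) *
          (3 * lam ^ ((2:ℝ)/3) - 12 * (z - th) ^ 2 / nu ^ 2 + 3 * B * lam ^ ((4:ℝ)/3)) := by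
  have heq : (fun z' => deriv (fun z'' => wNT p A T gamma2 M e nu B lam t z'' th) z')
      = fun z' => -(exp (p * A * (T - t)) / nu) *
          (3 * (z' - th) * lam ^ ((2:ℝ)/3) - 4 * (z' - th) ^ 3 / nu ^ 2
            + 3 * B * (z' - th) * lam ^ ((4:ℝ)/3)) := by
    funext z'; exact deriv_wNT_z p A T gamma2 M e nu B lam t z' th
  rw [heq]
  have hδ : ∀ x : ℝ, HasDerivAt (fun z' : ℝ => z' - th) 1 x := fun x => by
    simpa using (hasDerivAt_id x).sub_const th
  have h1 : HasDerivAt (fun z' : ℝ => 3 * (z' - th) * lam ^ ((2:ℝ)/3)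
      - 4 * (z' - th) ^ 3 / nu ^ 2 + 3 * B * (z' - th) * lam ^ ((4:ℝ)/3))
      (3 * lam ^ ((2:ℝ)/3) - 12 * (z - th) ^ 2 / nu ^ 2 + 3 * B * lam ^ ((4:ℝ)/3)) z := by
    have hcube : HasDerivAt (fun z' : ℝ => (z' - th) ^ 3) (3 * (z - th) ^ 2) z := by
      simpa [Function.comp_def] using (hasDerivAt_pow 3 (z - th)).comp z (hδ z)
    have := ((((hδ z).const_mul 3).mul_const (lam ^ ((2:ℝ)/3))).sub
      ((hcube.const_mul 4).div_const (nu^2))).add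
      (((hδ z).const_mul (3*B)).mul_const (lam ^ ((4:ℝ)/3)))
    refine this.congr_deriv ?_; ring
  exact (h1.const_mul (-(exp (p * A * (T - t)) / nu))).deriv

lemma deriv_wNT_t (p A T gamma2 M e nu B lam t z th : ℝ) (hp0 : p ≠ 0) :
    deriv (fun s => wNT p A T gamma2 M e nu B lam s z th) t
      = -A * exp (p * A * (T - t))
        + gamma2 * exp (p * A * (T - t)) * (p * A * (T - t) + 1) * lam ^ ((2:ℝ)/3)
        + p * A * (exp (p * A * (T - t)) / nu) * hFn nu B lam (z - th) := by
  have ht : HasDerivAt (fun s : ℝ => p * A * (T - s)) (-(p*A)) t := by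
    simpa using (((hasDerivAt_id t).const_sub T).const_mul (p*A))
  have hE : HasDerivAt (fun s : ℝ => exp (p * A * (T - s)))
      (exp (p * A * (T - t)) * (-(p*A))) t := ht.exp
  have hTt : HasDerivAt (fun s : ℝ => T - s) (-1) t := (hasDerivAt_id t).const_sub T
  have h : HasDerivAt (fun s => wNT p A T gamma2 M e nu B lam s z th)
      ((1/p) * (exp (p * A * (T - t)) * (-(p*A)))
        - gamma2 * (exp (p * A * (T - t)) * (-(p*A)) * (T - t)
            + exp (p * A * (T - t)) * (-1)) * lam ^ ((2:ℝ)/3)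
        - (exp (p * A * (T - t)) * (-(p*A)) / nu) * hFn nu B lam (z - th)) t := by
    have h1 := hE.const_mul (1/p)
    have h2 := (((hE.mul hTt).const_mul gamma2).mul_const (lam ^ ((2:ℝ)/3)))
    have h3 := (hE.div_const nu).mul_const (hFn nu B lam (z - th))
    have := ((h1.sub h2).add (hasDerivAt_const t (e*M*lam))).sub h3
    refine (this.congr_of_eventuallyEq (Filter.Eventually.of_forall fun s => ?_)).congr_deriv ?_
    · simp only [wNT, Pi.sub_apply, Pi.add_apply, Pi.mul_apply]; ring
    · ring
  rw [h.deriv]; field_simp; ring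

lemma mul_le_mul4 {a1 b1 a2 b2 a3 b3 a4 b4 : ℝ} (h1 : a1 ≤ b1) (h2 : a2 ≤ b2) (h3 : a3 ≤ b3)
    (h4 : a4 ≤ b4) (ha2 : 0 ≤ a2) (ha3 : 0 ≤ a3) (ha4 : 0 ≤ a4)
    (hb1 : 0 ≤ b1) (hb2 : 0 ≤ b2) (hb3 : 0 ≤ b3) :
    a1*a2*a3*a4 ≤ b1*b2*b3*b4 :=
  mul_le_mul (mul_le_mul (mul_le_mul h1 h2 ha2 hb1) h3 ha3 (mul_nonneg hb1 hb2)) h4 ha4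
    (mul_nonneg (mul_nonneg hb1 hb2) hb3)

lemma abs_mul4 (x1 x2 x3 x4 : ℝ) : |x1*x2*x3*x4| = |x1| * |x2| * |x3| * |x4| := by
  rw [abs_mul, abs_mul, abs_mul]

end aux


set_option maxHeartbeats 1000000 in
/-- Drift inequality in the no-trade region:
`-w_t + D w = ∓ pAMλ(1 - σ²(1-p)(z-θ)²/(2A)) + R` with `|R| ≤ Cλ`,
`C = 6(σ²/ν)(2νθ|(1-θ)(1-2θ)|+1)+1`, uniformly for `t ∈ [0,T]`, `|z-θ| ≤ νλ^{1/3}`. -/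
theorem stmt13 (p A T sig th M B e gamma2 nu : ℝ)
    (hp1 : p < 1) (hp0 : p ≠ 0) (hpA : p * A < 0) (hth : 0 < th) (hth1 : th ≠ 1)
    (hsig : 0 < sig) (hT : 0 < T) (hB : 0 < B) (hM : 0 < M) (he : e = 1 ∨ e = -1)
    (hgamma2 : gamma2 = ((9/32) * (1 - p) * th ^ 4 * (1 - th) ^ 4) ^ ((1:ℝ)/3) * sig ^ 2)
    (hnu : nu = (12 * th ^ 2 * (1 - th) ^ 2 / (1 - p)) ^ ((1:ℝ)/3)) :
    ∃ lam0 > 0, ∀ lam ∈ Ioo (0:ℝ) lam0, ∀ t ∈ Icc (0:ℝ) T, ∀ z : ℝ,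
      |z - th| ≤ nu * lam ^ ((1:ℝ)/3) →
      |(-(deriv (fun s => wNT p A T gamma2 M e nu B lam s z th) t)
          + (-p * (A - (1/2) * sig ^ 2 * (1 - p) * (z - th) ^ 2)
                * wNT p A T gamma2 M e nu B lam t z th
              + (1 - p) * sig ^ 2 * z * (1 - z) * (z - th)
                  * deriv (fun z' => wNT p A T gamma2 M e nu B lam t z' th) z
              - (1/2) * sig ^ 2 * z ^ 2 * (1 - z) ^ 2
                  * deriv (fun z' => deriv (fun z'' => wNT p A T gamma2 M e nu B lam t z'' th) z') z))
        - (-(e) * p * A * M * lam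
            * (1 - sig ^ 2 * (1 - p) * (z - th) ^ 2 / (2 * A)))|
        ≤ (6 * (sig ^ 2 / nu) * (2 * nu * th * |(1 - th) * (1 - 2 * th)| + 1) + 1) * lam := by
  have h1p : (0:ℝ) < 1 - p := by linarith
  have hA : A ≠ 0 := by rintro rfl; simp at hpA
  have h1th : 1 - th ≠ 0 := by intro h; exact hth1 (by linarith)
  have hxpos : (0:ℝ) < 12 * th ^ 2 * (1 - th) ^ 2 / (1 - p) := by positivity
  have hnu0 : (0:ℝ) < nu := by rw [hnu]; exact Real.rpow_pos_of_pos hxpos _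
  have hnu3 : nu ^ 3 = 12 * th ^ 2 * (1 - th) ^ 2 / (1 - p) := by
    rw [hnu, ← Real.rpow_natCast ((12 * th ^ 2 * (1 - th) ^ 2 / (1 - p)) ^ ((1:ℝ)/3)) 3,
      ← Real.rpow_mul hxpos.le]
    norm_num
  have hnu3' : (1 - p) * nu ^ 3 = 12 * th ^ 2 * (1 - th) ^ 2 := by
    rw [hnu3]; field_simp
  have hv6 : (1 - p) ^ 2 * (nu ^ 3) ^ 2 = 144 * (th ^ 2 * (1 - th) ^ 2) ^ 2 := by
    linear_combination ((1 - p) * nu ^ 3 + 12 * th ^ 2 * (1 - th) ^ 2) * hnu3'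
  have hkey : ((1 - p) * nu ^ 2 / 8) ^ 3 = (9/32) * (1 - p) * th ^ 4 * (1 - th) ^ 4 := by
    linear_combination ((1 - p) / 512) * hv6
  have hg2 : gamma2 = (1 - p) * nu ^ 2 / 8 * sig ^ 2 := by
    rw [hgamma2, ← hkey, ← Real.rpow_natCast ((1 - p) * nu ^ 2 / 8) 3,
      ← Real.rpow_mul (by positivity : (0:ℝ) ≤ (1 - p) * nu ^ 2 / 8)]
    norm_num
  -- constants
  obtain ⟨K, hKdef⟩ : ∃ K : ℝ, K = 2 * nu * th * |(1 - th) * (1 - 2 * th)| + 1 := ⟨_, rfl⟩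
  have hK1 : (1:ℝ) ≤ K := by
    have : (0:ℝ) ≤ 2 * nu * th * |(1 - th) * (1 - 2 * th)| := by positivity
    rw [hKdef]; linarith
  obtain ⟨c6, hc6def⟩ : ∃ c : ℝ, c = nu ^ 2 * ((|1 - 2 * th| + 1) ^ 2 + 2 * th * |1 - th|) :=
    ⟨_, rfl⟩
  obtain ⟨c2, hc2def⟩ : ∃ c : ℝ, c = (1/2) * sig ^ 2 * ((1 - p) * nu ^ 3 / 12 + K) * (1/nu)
      * (3 * B) := ⟨_, rfl⟩
  obtain ⟨c3, hc3def⟩ : ∃ c : ℝ, c = |p| * ((1/2) * sig ^ 2 * (1 - p) * nu ^ 2)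
      * ((1 - p) * nu ^ 2 / 8 * sig ^ 2 * 1 * T * 1) := ⟨_, rfl⟩
  obtain ⟨c4, hc4def⟩ : ∃ c : ℝ, c = |p| * ((1/2) * sig ^ 2 * (1 - p) * nu ^ 2) * (1/nu)
      * (nu ^ 2 * (5/2 + (3/2) * B)) := ⟨_, rfl⟩
  obtain ⟨c5, hc5def⟩ : ∃ c : ℝ, c = ((1 - p) * sig ^ 2) * ((th + 1) * (|1 - th| + 1)) * (1/nu)
      * (nu ^ 2 * (7 + 3 * B)) := ⟨_, rfl⟩
  obtain ⟨crest, hcrestdef⟩ : ∃ c : ℝ, c = c2 + c3 + c4 + c5 := ⟨_, rfl⟩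
  have hKpos : 0 < K := lt_of_lt_of_le one_pos hK1
  have hc2n : 0 ≤ c2 := by rw [hc2def]; positivity
  have hc3n : 0 ≤ c3 := by rw [hc3def]; positivity
  have hc4n : 0 ≤ c4 := by rw [hc4def]; positivity
  have hc5n : 0 ≤ c5 := by rw [hc5def]; positivity
  have hc6n : 0 ≤ c6 := by rw [hc6def]; positivity
  have hcrestn : 0 ≤ crest := by rw [hcrestdef]; linarith
  obtain ⟨eps, hepsdef⟩ : ∃ c : ℝ, c = min 1 (min (1/(nu+1)) (min (1/(c6+1)) (1/(crest+1)))) :=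
    ⟨_, rfl⟩
  have heps : 0 < eps := by
    rw [hepsdef, lt_min_iff, lt_min_iff, lt_min_iff]
    refine ⟨one_pos, by positivity, by positivity, by positivity⟩
  refine ⟨eps ^ 3, pow_pos heps 3, ?_⟩
  rintro lam ⟨hlam0, hlamlt⟩ t ⟨ht0, htT⟩ z hz
  obtain ⟨L, hLdef⟩ : ∃ c : ℝ, c = lam ^ ((1:ℝ)/3) := ⟨_, rfl⟩
  rw [← hLdef] at hz
  have hL0 : 0 < L := hLdef ▸ Real.rpow_pos_of_pos hlam0 _
  have hLeps : L < eps := by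
    have h := Real.rpow_lt_rpow hlam0.le hlamlt (by norm_num : (0:ℝ) < 1/3)
    rw [← Real.rpow_natCast eps 3, ← Real.rpow_mul heps.le] at h
    norm_num at h
    rw [hLdef]
    exact h
  rw [hepsdef] at hLeps
  have hL1 : L ≤ 1 := (hLeps.le.trans (min_le_left _ _))
  have hLnu : L ≤ 1/(nu+1) :=
    hLeps.le.trans ((min_le_right _ _).trans (min_le_left _ _))
  have hnuL : nu * L ≤ 1 := by
    calc nu * L ≤ nu * (1/(nu+1)) := mul_le_mul_of_nonneg_left hLnu hnu0.le
      _ ≤ 1 := by rw [mul_one_div, div_le_one (by positivity)]; linarith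
  have hLc6 : L ≤ 1/(c6+1) :=
    hLeps.le.trans ((min_le_right _ _).trans ((min_le_right _ _).trans (min_le_left _ _)))
  have hc6L : c6 * L ≤ 1 := by
    calc c6 * L ≤ c6 * (1/(c6+1)) := mul_le_mul_of_nonneg_left hLc6 hc6n
      _ ≤ 1 := by rw [mul_one_div, div_le_one (by positivity)]; linarith
  have hLcrest : L ≤ 1/(crest+1) :=
    hLeps.le.trans ((min_le_right _ _).trans ((min_le_right _ _).trans (min_le_right _ _)))
  have hcrestL : crest * L ≤ 1 := by
    calc crest * L ≤ crest * (1/(crest+1)) := mul_le_mul_of_nonneg_left hLcrest hcrestn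
      _ ≤ 1 := by rw [mul_one_div, div_le_one (by positivity)]; linarith
  have hL2 : lam ^ ((2:ℝ)/3) = L ^ 2 := by
    rw [hLdef, ← Real.rpow_natCast (lam ^ ((1:ℝ)/3)) 2, ← Real.rpow_mul hlam0.le]
    norm_num
  have hL4 : lam ^ ((4:ℝ)/3) = L ^ 4 := by
    rw [hLdef, ← Real.rpow_natCast (lam ^ ((1:ℝ)/3)) 4, ← Real.rpow_mul hlam0.le]
    norm_num
  have hlam_eq : lam = L ^ 3 := by
    rw [hLdef, ← Real.rpow_natCast (lam ^ ((1:ℝ)/3)) 3, ← Real.rpow_mul hlam0.le]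
    norm_num
  -- abbreviations
  have hE0 : 0 < exp (p * A * (T - t)) := exp_pos _
  have hE1 : exp (p * A * (T - t)) ≤ 1 := by
    rw [exp_le_one_iff]
    exact mul_nonpos_of_nonpos_of_nonneg hpA.le (by linarith)
  have hd2 : (z - th) ^ 2 ≤ nu ^ 2 * L ^ 2 := by
    calc (z - th) ^ 2 = |z - th| ^ 2 := (sq_abs _).symm
      _ ≤ (nu * L) ^ 2 := pow_le_pow_left₀ (abs_nonneg _) hz 2
      _ = nu ^ 2 * L ^ 2 := by ring
  have hd4 : (z - th) ^ 4 ≤ nu ^ 4 * L ^ 4 := by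
    calc (z - th) ^ 4 = |z - th| ^ 4 := by
          rw [← abs_pow]; exact (abs_of_nonneg (by positivity)).symm
      _ ≤ (nu * L) ^ 4 := pow_le_pow_left₀ (abs_nonneg _) hz 4
      _ = nu ^ 4 * L ^ 4 := by ring
  -- key component bounds
  have hkk : (1 - p) * nu ^ 3 / 12 = th ^ 2 * (1 - th) ^ 2 := by rw [hnu3']; ring
  have habs_sub : ∀ x y : ℝ, |x - y| ≤ |x| + |y| := fun x y => by
    calc |x - y| = |x + -y| := by ring_nf
      _ ≤ |x| + |-y| := abs_add_le _ _
      _ = |x| + |y| := by rw [abs_neg]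
  have hzth1 : |z - th| ≤ 1 := hz.trans hnuL
  have hu : |z^2*(1-z)^2 - (1-p)*nu^3/12| ≤ K*L := by
    rw [hkk]
    have hsplit : z^2*(1-z)^2 - th^2*(1-th)^2
        = 2*th*((1-th)*(1-2*th))*(z-th)
          + (((z-th)*((1-2*th)-(z-th)))^2 - 2*th*(1-th)*(z-th)^2) := by ring
    rw [hsplit]
    have b1 : |2*th*((1-th)*(1-2*th))*(z-th)| ≤ 2*nu*th* |(1-th)*(1-2*th)| *L := by
      rw [abs_mul, abs_mul, abs_of_pos (by positivity : (0:ℝ) < 2*th)]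
      calc 2*th* |(1-th)*(1-2*th)| * |z-th| ≤ 2*th* |(1-th)*(1-2*th)| *(nu*L) :=
            mul_le_mul_of_nonneg_left hz (by positivity)
        _ = 2*nu*th* |(1-th)*(1-2*th)| *L := by ring
    have hq : |(z-th)*((1-2*th)-(z-th))| ≤ nu*L*(|1-2*th|+1) := by
      rw [abs_mul]
      have h1 : |(1-2*th)-(z-th)| ≤ |1-2*th| + 1 :=
        (habs_sub _ _).trans (by linarith only [hzth1])
      exact mul_le_mul hz h1 (abs_nonneg _) (by positivity)
    have b2 : |((z-th)*((1-2*th)-(z-th)))^2 - 2*th*(1-th)*(z-th)^2| ≤ 1*L := by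
      have hq2 : ((z-th)*((1-2*th)-(z-th)))^2 ≤ (nu*L*(|1-2*th|+1))^2 := by
        rw [← sq_abs]; exact pow_le_pow_left₀ (abs_nonneg _) hq 2
      have h2 : |2*th*(1-th)*(z-th)^2| = 2*th* |1-th| *(z-th)^2 := by
        rw [abs_mul, abs_mul, abs_of_pos (by positivity : (0:ℝ) < 2*th),
          abs_of_nonneg (sq_nonneg (z-th))]
      calc |((z-th)*((1-2*th)-(z-th)))^2 - 2*th*(1-th)*(z-th)^2|
          ≤ |((z-th)*((1-2*th)-(z-th)))^2| + |2*th*(1-th)*(z-th)^2| := habs_sub _ _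
        _ = ((z-th)*((1-2*th)-(z-th)))^2 + 2*th* |1-th| *(z-th)^2 := by
            rw [abs_of_nonneg (sq_nonneg _), h2]
        _ ≤ (nu*L*(|1-2*th|+1))^2 + 2*th* |1-th| *(nu^2*L^2) :=
            add_le_add hq2 (mul_le_mul_of_nonneg_left hd2 (by positivity))
        _ = (c6*L)*L := by rw [hc6def]; ring
        _ ≤ 1*L := mul_le_mul_of_nonneg_right hc6L hL0.le
    calc |2*th*((1-th)*(1-2*th))*(z-th)
          + (((z-th)*((1-2*th)-(z-th)))^2 - 2*th*(1-th)*(z-th)^2)|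
        ≤ |2*th*((1-th)*(1-2*th))*(z-th)|
          + |((z-th)*((1-2*th)-(z-th)))^2 - 2*th*(1-th)*(z-th)^2| := abs_add_le _ _
      _ ≤ 2*nu*th* |(1-th)*(1-2*th)| *L + 1*L := add_le_add b1 b2
      _ = K*L := by rw [hKdef]; ring
  have hz2b : z^2*(1-z)^2 ≤ (1-p)*nu^3/12 + K := by
    have h := (abs_le.mp hu).2
    have hKL : K*L ≤ K := mul_le_of_le_one_right hKpos.le hL1
    linarith only [h, hKL]
  have hz2n : (0:ℝ) ≤ (1-p)*nu^3/12 + K := by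
    have : (0:ℝ) ≤ (1-p)*nu^3 := mul_nonneg h1p.le (by positivity)
    linarith
  have hdiv2 : (z-th)^2/nu^2 ≤ L^2 := by
    rw [div_le_iff₀ (by positivity)]; linarith only [hd2]
  have hdiv2n : (0:ℝ) ≤ (z-th)^2/nu^2 := by positivity
  have hv : |3*L^2 - 12*((z-th)^2/nu^2)| ≤ 9*L^2 := by
    rw [abs_le]; constructor <;> [linarith only [hdiv2, hdiv2n, sq_nonneg L]; linarith only [hdiv2, hdiv2n, sq_nonneg L]]
  have hdiv4 : (z-th)^4/nu^2 ≤ nu^2*L^4 := by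
    rw [div_le_iff₀ (by positivity)]; linarith only [hd4]
  have hdiv4n : (0:ℝ) ≤ (z-th)^4/nu^2 := by positivity
  have hL2le : L^2 ≤ 1 := by nlinarith only [hL0, hL1]
  have h22 : (z-th)^2*L^2 ≤ nu^2*L^4 := by
    calc (z-th)^2*L^2 ≤ (nu^2*L^2)*L^2 := mul_le_mul_of_nonneg_right hd2 (sq_nonneg L)
      _ = nu^2*L^4 := by ring
  have h24 : (z-th)^2*L^4 ≤ nu^2*L^4 := by
    calc (z-th)^2*L^4 ≤ (nu^2*L^2)*L^4 :=
          mul_le_mul_of_nonneg_right hd2 (by positivity)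
      _ = (nu^2*L^4)*L^2 := by ring
      _ ≤ (nu^2*L^4)*1 := mul_le_mul_of_nonneg_left hL2le (by positivity)
      _ = nu^2*L^4 := by ring
  have hB24 : B*((z-th)^2*L^4) ≤ B*(nu^2*L^4) := mul_le_mul_of_nonneg_left h24 hB.le
  have hnL4 : (0:ℝ) ≤ nu^2*L^4 := by positivity
  have hdL2 : (0:ℝ) ≤ (z-th)^2*L^2 := by positivity
  have hBd4 : (0:ℝ) ≤ B*((z-th)^2*L^4) :=
    mul_nonneg hB.le (mul_nonneg (sq_nonneg _) (by positivity))
  have hBn4 : (0:ℝ) ≤ B*(nu^2*L^4) := mul_nonneg hB.le hnL4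
  have hH : |(3/2)*(z-th)^2*L^2 - (z-th)^4/nu^2 + (3/2)*B*(z-th)^2*L^4|
      ≤ nu^2*(5/2+(3/2)*B)*L^4 := by
    rw [abs_le]
    constructor
    · linarith only [hdiv4, hdL2, hBd4, hBn4, hnL4]
    · linarith only [hdiv4n, h22, hB24, hnL4]
  have hP5 : |3*(z-th)^2*L^2 - 4*((z-th)^4/nu^2) + 3*B*(z-th)^2*L^4|
      ≤ nu^2*(7+3*B)*L^4 := by
    rw [abs_le]
    constructor
    · linarith only [hdiv4, hdL2, hBd4, hBn4, hnL4]
    · linarith only [hdiv4n, h22, hB24, hnL4]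
  have hzb : |z*(1-z)| ≤ (th+1)*(|1-th|+1) := by
    rw [abs_mul]
    have hz1 : |z| ≤ th + 1 := by
      have : z = th + (z - th) := by ring
      rw [this]
      calc |th + (z-th)| ≤ |th| + |z-th| := abs_add_le _ _
        _ ≤ th + 1 := by rw [abs_of_pos hth]; linarith
    have hz2' : |1-z| ≤ |1-th| + 1 := by
      have : (1:ℝ) - z = (1-th) - (z-th) := by ring
      rw [this]
      exact (habs_sub _ _).trans (by linarith only [hzth1])
    exact mul_le_mul hz1 hz2' (abs_nonneg _) (by positivity)
  -- rewrite derivatives and pass to the decomposition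
  rw [deriv_wNT_t p A T gamma2 M e nu B lam t z th hp0,
    deriv_wNT_z p A T gamma2 M e nu B lam t z th,
    deriv2_wNT_z p A T gamma2 M e nu B lam t z th]
  simp only [wNT, hFn]
  rw [hg2, hL2, hL4, hlam_eq]
  obtain ⟨E, hEdef⟩ : ∃ E : ℝ, E = exp (p * A * (T - t)) := ⟨_, rfl⟩
  rw [← hEdef]
  rw [← hEdef] at hE0 hE1
  have hEnun : (0:ℝ) ≤ E/nu := (div_pos hE0 hnu0).le
  have hEnu : E/nu ≤ 1/nu := by
    exact div_le_div_of_nonneg_right hE1 hnu0.le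
  -- bounds for the five terms
  have hC1n : (0:ℝ) ≤ (1/2)*sig^2*(1-p)*(z-th)^2 :=
    mul_nonneg (mul_nonneg (by positivity) h1p.le) (sq_nonneg _)
  have hC1b : (1/2)*sig^2*(1-p)*(z-th)^2 ≤ (1/2)*sig^2*(1-p)*(nu^2*L^2) :=
    mul_le_mul_of_nonneg_left hd2 (mul_nonneg (by positivity) h1p.le)
  have hC1bn : (0:ℝ) ≤ (1/2)*sig^2*(1-p)*(nu^2*L^2) :=
    mul_nonneg (mul_nonneg (by positivity) h1p.le) (by positivity)
  have b1 : |(1/2)*sig^2 * (z^2*(1-z)^2 - (1-p)*nu^3/12) * (E/nu) * (3*L^2 - 12*((z-th)^2/nu^2))|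
      ≤ (1/2)*sig^2*(K*L)*(1/nu)*(9*L^2) := by
    rw [abs_mul4]
    exact mul_le_mul4 (le_of_eq (abs_of_nonneg (by positivity))) hu
      ((abs_of_nonneg hEnun).le.trans hEnu) hv (abs_nonneg _) (abs_nonneg _) (abs_nonneg _)
      (by positivity) (by positivity) (by positivity)
  have b2 : |(1/2)*sig^2 * (z^2*(1-z)^2) * (E/nu) * (3*B*L^4)| ≤ c2*L^4 := by
    rw [abs_mul4]
    calc |(1/2)*sig^2| * |z^2*(1-z)^2| * |E/nu| * |3*B*L^4|
        ≤ ((1/2)*sig^2) * ((1-p)*nu^3/12+K) * (1/nu) * (3*B*L^4) :=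
          mul_le_mul4 (le_of_eq (abs_of_nonneg (by positivity)))
            ((abs_of_nonneg (by positivity)).le.trans hz2b)
            ((abs_of_nonneg hEnun).le.trans hEnu)
            (le_of_eq (abs_of_nonneg (by positivity)))
            (abs_nonneg _) (abs_nonneg _) (abs_nonneg _)
            (by positivity) hz2n (by positivity)
      _ = c2*L^4 := by rw [hc2def]; ring
  have b3 : |(-p) * ((1/2)*sig^2*(1-p)*(z-th)^2) * ((1-p)*nu^2/8*sig^2*E*(T-t)*L^2)|
      ≤ c3*L^4 := by
    rw [abs_mul, abs_mul]
    have hg'n : (0:ℝ) ≤ (1-p)*nu^2/8*sig^2 :=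
      mul_nonneg (div_nonneg (mul_nonneg h1p.le (sq_nonneg _)) (by norm_num)) (sq_nonneg _)
    have hC2n : (0:ℝ) ≤ (1-p)*nu^2/8*sig^2*E*(T-t)*L^2 :=
      mul_nonneg (mul_nonneg (mul_nonneg hg'n hE0.le) (by linarith)) (sq_nonneg _)
    have hC2b : (1-p)*nu^2/8*sig^2*E*(T-t)*L^2 ≤ (1-p)*nu^2/8*sig^2*1*T*1*L^2 := by
      have s1 : (1-p)*nu^2/8*sig^2*E ≤ (1-p)*nu^2/8*sig^2*1 :=
        mul_le_mul_of_nonneg_left hE1 hg'n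
      have s2 : (1-p)*nu^2/8*sig^2*E*(T-t) ≤ (1-p)*nu^2/8*sig^2*1*T :=
        mul_le_mul s1 (by linarith) (by linarith) (by linarith [hg'n])
      calc (1-p)*nu^2/8*sig^2*E*(T-t)*L^2 ≤ ((1-p)*nu^2/8*sig^2*1*T)*L^2 :=
            mul_le_mul_of_nonneg_right s2 (sq_nonneg L)
        _ = (1-p)*nu^2/8*sig^2*1*T*1*L^2 := by ring
    calc |(-p)| * |(1/2)*sig^2*(1-p)*(z-th)^2| * |(1-p)*nu^2/8*sig^2*E*(T-t)*L^2|
        = |p| * ((1/2)*sig^2*(1-p)*(z-th)^2) * ((1-p)*nu^2/8*sig^2*E*(T-t)*L^2) := by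
          rw [abs_neg, abs_of_nonneg hC1n, abs_of_nonneg hC2n]
      _ ≤ |p| * ((1/2)*sig^2*(1-p)*(nu^2*L^2)) * ((1-p)*nu^2/8*sig^2*1*T*1*L^2) :=
          mul_le_mul (mul_le_mul_of_nonneg_left hC1b (abs_nonneg _)) hC2b hC2n
            (mul_nonneg (abs_nonneg _) hC1bn)
      _ = c3*L^4 := by rw [hc3def]; ring
  have b4 : |(-p) * ((1/2)*sig^2*(1-p)*(z-th)^2) * (E/nu)
        * ((3/2)*(z-th)^2*L^2 - (z-th)^4/nu^2 + (3/2)*B*(z-th)^2*L^4)| ≤ c4*L^4 := by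
    rw [abs_mul4]
    calc |(-p)| * |(1/2)*sig^2*(1-p)*(z-th)^2| * |E/nu|
          * |(3/2)*(z-th)^2*L^2 - (z-th)^4/nu^2 + (3/2)*B*(z-th)^2*L^4|
        ≤ |p| * ((1/2)*sig^2*(1-p)*(nu^2*L^2)) * (1/nu) * (nu^2*(5/2+(3/2)*B)*L^4) := by
          rw [abs_neg]
          exact mul_le_mul4 (le_refl _) ((abs_of_nonneg hC1n).le.trans hC1b)
            ((abs_of_nonneg hEnun).le.trans hEnu) hH (abs_nonneg _) (abs_nonneg _)
            (abs_nonneg _) (abs_nonneg _) hC1bn (by positivity)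
      _ = c4*(L^2*L^4) := by rw [hc4def]; ring
      _ ≤ c4*L^4 := by
          have h6 : L^2*L^4 ≤ L^4 := by
            calc L^2*L^4 = L^4*L^2 := by ring
              _ ≤ L^4*1 := mul_le_mul_of_nonneg_left hL2le (by positivity)
              _ = L^4 := by ring
          exact mul_le_mul_of_nonneg_left h6 hc4n
  have b5 : |(-((1-p)*sig^2)) * (z*(1-z)) * (E/nu)
        * (3*(z-th)^2*L^2 - 4*((z-th)^4/nu^2) + 3*B*(z-th)^2*L^4)| ≤ c5*L^4 := by
    rw [abs_mul4]
    calc |(-((1-p)*sig^2))| * |z*(1-z)| * |E/nu|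
          * |3*(z-th)^2*L^2 - 4*((z-th)^4/nu^2) + 3*B*(z-th)^2*L^4|
        ≤ ((1-p)*sig^2) * ((th+1)*(|1-th|+1)) * (1/nu) * (nu^2*(7+3*B)*L^4) := by
          rw [abs_neg, abs_of_nonneg (mul_nonneg h1p.le (sq_nonneg sig))]
          exact mul_le_mul4 (le_refl _) hzb ((abs_of_nonneg hEnun).le.trans hEnu) hP5
            (abs_nonneg _) (abs_nonneg _) (abs_nonneg _)
            (mul_nonneg h1p.le (sq_nonneg sig)) (by positivity) (by positivity)
      _ = c5*L^4 := by rw [hc5def]; ring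
  have hR : |(1/2)*sig^2 * (z^2*(1-z)^2 - (1-p)*nu^3/12) * (E/nu) * (3*L^2 - 12*((z-th)^2/nu^2))
      + (1/2)*sig^2 * (z^2*(1-z)^2) * (E/nu) * (3*B*L^4)
      + (-p) * ((1/2)*sig^2*(1-p)*(z-th)^2) * ((1-p)*nu^2/8*sig^2*E*(T-t)*L^2)
      + (-p) * ((1/2)*sig^2*(1-p)*(z-th)^2) * (E/nu)
          * ((3/2)*(z-th)^2*L^2 - (z-th)^4/nu^2 + (3/2)*B*(z-th)^2*L^4)
      + (-((1-p)*sig^2)) * (z*(1-z)) * (E/nu)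
          * (3*(z-th)^2*L^2 - 4*((z-th)^4/nu^2) + 3*B*(z-th)^2*L^4)|
      ≤ (6*(sig^2/nu)*K + 1) * L^3 := by
    have habs5 : ∀ x1 x2 x3 x4 x5 : ℝ, |x1+x2+x3+x4+x5| ≤ |x1|+|x2|+|x3|+|x4|+|x5| := by
      intro x1 x2 x3 x4 x5
      calc |x1+x2+x3+x4+x5| ≤ |x1+x2+x3+x4| + |x5| := abs_add_le _ _
        _ ≤ (|x1+x2+x3| + |x4|) + |x5| := by gcongr; exact abs_add_le _ _
        _ ≤ ((|x1+x2| + |x3|) + |x4|) + |x5| := by gcongr; exact abs_add_le _ _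
        _ ≤ (((|x1| + |x2|) + |x3|) + |x4|) + |x5| := by gcongr; exact abs_add_le _ _
        _ = |x1|+|x2|+|x3|+|x4|+|x5| := by ring
    refine le_trans (habs5 _ _ _ _ _) ?_
    have hsum : (1/2)*sig^2*(K*L)*(1/nu)*(9*L^2) + c2*L^4 + c3*L^4 + c4*L^4 + c5*L^4
        ≤ (6*(sig^2/nu)*K + 1) * L^3 := by
      have h1 : c2*L^4 + c3*L^4 + c4*L^4 + c5*L^4 = (crest*L)*L^3 := by
        rw [hcrestdef]; ring
      have h2 : (crest*L)*L^3 ≤ 1*L^3 := mul_le_mul_of_nonneg_right hcrestL (by positivity)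
      have h3 : (1/2)*sig^2*(K*L)*(1/nu)*(9*L^2) = (9/2)*(sig^2/nu*K)*L^3 := by ring
      have h4 : (9/2)*(sig^2/nu*K)*L^3 ≤ 6*(sig^2/nu)*K*L^3 := by
        have h5 : (0:ℝ) ≤ (sig^2/nu*K)*L^3 := by positivity
        linarith only [h5]
      linarith only [h1, h2, h3, h4]
    exact le_trans (add_le_add (add_le_add (add_le_add (add_le_add b1 b2) b3) b4) b5) hsum
  rw [hKdef] at hR
  refine le_trans (le_of_eq (congrArg abs ?_)) hR
  field_simp
  ring
end
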